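/- The group C₃ × S₄, the direct product of the cyclic group of order 3 and the symmetric group on 4 letters (a solvable group of order 72), is an Oliver group. -/

import Mathlib

/-- A finite group `G` *contains an Oliver series* if there are subgroups
`P ≤ H ≤ G` with `P` normal in `H` and `H` normal in `G`, such that `|P|` is a prime
power `p ^ a` (with `a ≥ 0`, so the trivial group is allowed), `|G/H|` is a prime power
`q ^ b` (with `b ≥ 0`), and `H/P` is cyclic. -/
def HasOliverSeries (G : Type*) [Group G] : Prop :=
  ∃ P H : Subgroup G, ∃ _ : P ≤ H, ∃ _ : H.Normal, ∃ hP : (P.subgroupOf H).Normal,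
    (∃ p a : ℕ, p.Prime ∧ Nat.card P = p ^ a) ∧
    (∃ q b : ℕ, q.Prime ∧ Nat.card (G ⧸ H) = q ^ b) ∧
    (letI := hP; IsCyclic (H ⧸ P.subgroupOf H))

/-- A finite group is an *Oliver group* if it contains no Oliver series. -/
def IsOliverGroup (G : Type*) [Group G] : Prop := ¬ HasOliverSeries G

set_option maxRecDepth 100000

namespace OliverAux72

open Equiv Equiv.Perm
open scoped commutatorElement

abbrev G72 := Multiplicative (ZMod 3) × Equiv.Perm (Fin 4)
abbrev P4 := Equiv.Perm (Fin 4)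

/-! ### Generic helper lemmas -/

lemma comm_mem' {Γ : Type*} [Group Γ] (H : Subgroup Γ) [hn : H.Normal]
    (hc : IsCyclic (Γ ⧸ H)) (u v : Γ) : u*v*u⁻¹*v⁻¹ ∈ H := by
  haveI := hc
  letI : CommGroup (Γ ⧸ H) := IsCyclic.commGroup
  have h1 : (QuotientGroup.mk' H) (u*v*u⁻¹*v⁻¹) = 1 := by
    have h2 : (QuotientGroup.mk' H) ⁅u, v⁆ = 1 := by
      rw [map_commutatorElement]
      exact commutatorElement_eq_one_iff_mul_comm.mpr (mul_comm _ _)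
    simpa [commutatorElement_def] using h2
  rwa [← MonoidHom.mem_ker, QuotientGroup.ker_mk'] at h1

lemma comm_mem {Γ : Type*} [Group Γ] {P H : Subgroup Γ} (hPH : P ≤ H)
    (hn : (P.subgroupOf H).Normal)
    (hc : letI := hn; IsCyclic (H ⧸ P.subgroupOf H))
    {u v : Γ} (hu : u ∈ H) (hv : v ∈ H) : u*v*u⁻¹*v⁻¹ ∈ P := by
  letI := hn
  have h := comm_mem' (P.subgroupOf H) hc ⟨u,hu⟩ ⟨v,hv⟩
  rw [Subgroup.mem_subgroupOf] at h
  simpa using h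

lemma card_le_of_finset {Γ : Type*} [Group Γ] [Fintype Γ] (H : Subgroup Γ) (s : Finset Γ)
    (h : ∀ x ∈ s, x ∈ H) : s.card ≤ Nat.card H := by
  classical
  have hsub : s ⊆ (H : Set Γ).toFinset := fun x hx => Set.mem_toFinset.mpr (h x hx)
  calc s.card ≤ (H : Set Γ).toFinset.card := Finset.card_le_card hsub
    _ = Fintype.card (H : Set Γ) := Set.toFinset_card _
    _ = Nat.card (H : Set Γ) := (Nat.card_eq_fintype_card).symm
    _ = Nat.card H := by rw [SetLike.coe_sort_coe]

lemma mem_finset_of_mem {Γ : Type*} [Group Γ] [Fintype Γ] (H : Subgroup Γ) (t : Finset Γ)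
    (h : ∀ x ∈ t, x ∈ H) (hc : Nat.card H ≤ t.card) : ∀ x ∈ H, x ∈ t := by
  classical
  have hsub : t ⊆ (H : Set Γ).toFinset := fun x hx => Set.mem_toFinset.mpr (h x hx)
  have hcard : (H : Set Γ).toFinset.card ≤ t.card := by
    calc (H : Set Γ).toFinset.card = Fintype.card (H : Set Γ) := Set.toFinset_card _
      _ = Nat.card (H : Set Γ) := (Nat.card_eq_fintype_card).symm
      _ = Nat.card H := by rw [SetLike.coe_sort_coe]
      _ ≤ t.card := hc
  have heq := Finset.eq_of_subset_of_card_le hsub hcard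
  intro x hx
  rw [heq]
  exact Set.mem_toFinset.mpr hx

lemma prime_pow_not_div_6 {p a n : ℕ} (hp : p.Prime) (hn : n = p^a)
    (h2 : 2 ∣ n) (h3 : 3 ∣ n) : False := by
  subst hn
  have hp2 : 2 = p := ((Nat.prime_dvd_prime_iff_eq Nat.prime_two hp).mp
    (Nat.Prime.dvd_of_dvd_pow Nat.prime_two h2))
  have hp3 : 3 = p := ((Nat.prime_dvd_prime_iff_eq Nat.prime_three hp).mp
    (Nat.Prime.dvd_of_dvd_pow Nat.prime_three h3))
  omega

lemma two_three_dvd {Γ : Type*} [Group Γ] {P : Subgroup Γ} {p a : ℕ}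
    (hp : p.Prime) (hcard : Nat.card P = p^a) {x y : Γ} (hx : x ∈ P) (hy : y ∈ P)
    (hx2 : x*x = 1) (hxn : x ≠ 1) (hy3 : y*y*y = 1) (hyn : y ≠ 1) : False := by
  have hox : orderOf x = 2 := orderOf_eq_prime (by rw [pow_two]; exact hx2) hxn
  have hoy : orderOf y = 3 := orderOf_eq_prime (by rw [pow_succ, pow_two]; exact hy3) hyn
  have h2 : 2 ∣ Nat.card P := by
    rw [← hox, ← Subgroup.orderOf_mk x hx]; exact orderOf_dvd_natCard _
  have h3 : 3 ∣ Nat.card P := by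
    rw [← hoy, ← Subgroup.orderOf_mk y hy]; exact orderOf_dvd_natCard _
  exact prime_pow_not_div_6 hp hcard h2 h3

/-! ### Concrete elements of `G72` -/

def sgn : G72 →* ℤˣ :=
  Equiv.Perm.sign.comp (MonoidHom.snd (Multiplicative (ZMod 3)) (Equiv.Perm (Fin 4)))

lemma sgn_apply (x : G72) : sgn x = Perm.sign x.2 := rfl

-- three 3-cycles (as explicit commutators of transpositions)
def d1 : P4 := (swap 0 1)*(swap 1 2)*(swap 0 1)⁻¹*(swap 1 2)⁻¹
def d2 : P4 := (swap 0 1)*(swap 1 3)*(swap 0 1)⁻¹*(swap 1 3)⁻¹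
def d3 : P4 := (swap 0 2)*(swap 2 3)*(swap 0 2)⁻¹*(swap 2 3)⁻¹

def A1 : G72 := (1, swap 0 1)
def A2 : G72 := (1, swap 1 2)
def A3 : G72 := (1, swap 1 3)
def A4 : G72 := (1, swap 0 2)
def A5 : G72 := (1, swap 2 3)

def E1 : G72 := (1, d1)
def E2 : G72 := (1, d2)
def E3 : G72 := (1, d3)

-- Klein four group elements
def vA : G72 := (1, swap 0 1 * swap 2 3)
def vB : G72 := (1, swap 0 3 * swap 1 2)

def VK : Subgroup G72 where
  carrier := {x | x = 1 ∨ x = vA ∨ x = vB ∨ x = vA*vB}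
  mul_mem' := by rintro a b (rfl|rfl|rfl|rfl) (rfl|rfl|rfl|rfl) <;> decide
  one_mem' := Or.inl rfl
  inv_mem' := by rintro a (rfl|rfl|rfl|rfl) <;> decide

-- 3-cycle elements of G72 (even)
def gc1 : G72 := (1, swap 0 1 * swap 1 2)
def gc2 : G72 := (1, swap 0 1 * swap 1 3)
def gc3 : G72 := (1, swap 1 2 * swap 2 3)

-- the set of squares in G72
def TF : Finset G72 := Finset.univ.image (fun g => g*g)

lemma comm_pair (x y : G72) :
    x*y*x⁻¹*y⁻¹ = ((1 : Multiplicative (ZMod 3)), x.2*y.2*x.2⁻¹*y.2⁻¹) := by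
  obtain ⟨a, s⟩ := x
  obtain ⟨b, t⟩ := y
  refine Prod.ext ?_ rfl
  show a*b*a⁻¹*b⁻¹ = 1
  exact commutatorElement_eq_one_iff_mul_comm.mpr (mul_comm a b)

/-! ### Decidable facts -/

lemma card72 : Nat.card G72 = 72 := by
  rw [Nat.card_eq_fintype_card]; decide

lemma fact_TF_card : TF.card = 36 := by decide

lemma fact_S3_card : (Finset.univ.filter (fun x : G72 => x*x*x = 1)).card = 27 := by decide

lemma fact_S2_card : (Finset.univ.filter (fun x : G72 => x*x = 1)).card = 10 := by decide

lemma fact_cube : ∀ g : G72,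
    (g*g)*(g*g)*(g*g) = 1 ∨ (g*g)*(g*g)*(g*g) = vA ∨
    (g*g)*(g*g)*(g*g) = vB ∨ (g*g)*(g*g)*(g*g) = vA*vB := by decide

lemma fact_odd : ∀ s : P4, Perm.sign s = -1 →
    ((s*d1*s⁻¹*d1⁻¹)*(s*d1*s⁻¹*d1⁻¹)*(s*d1*s⁻¹*d1⁻¹) = 1 ∧ s*d1*s⁻¹*d1⁻¹ ≠ 1) ∨
    ((s*d2*s⁻¹*d2⁻¹)*(s*d2*s⁻¹*d2⁻¹)*(s*d2*s⁻¹*d2⁻¹) = 1 ∧ s*d2*s⁻¹*d2⁻¹ ≠ 1) ∨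
    ((s*d3*s⁻¹*d3⁻¹)*(s*d3*s⁻¹*d3⁻¹)*(s*d3*s⁻¹*d3⁻¹) = 1 ∧ s*d3*s⁻¹*d3⁻¹ ≠ 1) := by decide

lemma eqE1 : A1*A2*A1⁻¹*A2⁻¹ = E1 := by decide
lemma eqE2 : A1*A3*A1⁻¹*A3⁻¹ = E2 := by decide
lemma eqE3 : A4*A5*A4⁻¹*A5⁻¹ = E3 := by decide
lemma eqvA : gc1*gc2*gc1⁻¹*gc2⁻¹ = vA := by decide
lemma eqvB : gc1*gc3*gc1⁻¹*gc3⁻¹ = vB := by decide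
lemma w2sq : (E1*E2*E1⁻¹*E2⁻¹)*(E1*E2*E1⁻¹*E2⁻¹) = 1 := by decide
lemma w2ne : E1*E2*E1⁻¹*E2⁻¹ ≠ 1 := by decide
lemma E1cube : E1*E1*E1 = 1 := by decide
lemma E1ne : E1 ≠ 1 := by decide
def sq1 : G72 := (1, (swap 0 1 * swap 1 2)*(swap 0 1 * swap 1 2))
def sq2 : G72 := (1, (swap 0 1 * swap 1 3)*(swap 0 1 * swap 1 3))
def sq3 : G72 := (1, (swap 1 2 * swap 2 3)*(swap 1 2 * swap 2 3))
lemma gc1sq : sq1 * sq1 = gc1 := by decide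
lemma gc2sq : sq2 * sq2 = gc2 := by decide
lemma gc3sq : sq3 * sq3 = gc3 := by decide

instance : DecidablePred (· ∈ sgn.ker) := fun x => by
  have hiff : (x ∈ sgn.ker) ↔ (Perm.sign x.2 = 1) := by
    rw [MonoidHom.mem_ker, sgn_apply]
  exact decidable_of_iff _ hiff.symm

lemma ker36 : Nat.card sgn.ker = 36 := by
  rw [Nat.card_eq_fintype_card]
  decide

lemma pair_cube_one {y : P4} (h : y*y*y = 1) :
    (((1 : Multiplicative (ZMod 3)), y) : G72)*((1,y))*((1,y)) = 1 := by
  rw [Prod.mk_mul_mk, Prod.mk_mul_mk, one_mul, one_mul, h]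
  rfl

lemma pair_ne_one {y : P4} (h : y ≠ 1) :
    (((1 : Multiplicative (ZMod 3)), y) : G72) ≠ 1 := by
  intro hc
  exact h (congrArg Prod.snd hc)

lemma fact_comm_klein : ∀ s t : P4, Perm.sign s = 1 → Perm.sign t = 1 →
    (s*t*s⁻¹*t⁻¹ = 1 ∨ s*t*s⁻¹*t⁻¹ = (swap 0 1 * swap 2 3) ∨
     s*t*s⁻¹*t⁻¹ = (swap 0 3 * swap 1 2) ∨
     s*t*s⁻¹*t⁻¹ = (swap 0 1 * swap 2 3) * (swap 0 3 * swap 1 2)) := by decide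

/-! ### Solvability -/

lemma solvable72 : IsSolvable G72 := by
  refine ⟨⟨3, ?_⟩⟩
  have dd1 : derivedSeries G72 1 ≤ sgn.ker := by
    rw [derivedSeries_succ, derivedSeries_zero, Subgroup.commutator_le]
    intro g _ h _
    rw [MonoidHom.mem_ker, map_commutatorElement]
    exact commutatorElement_eq_one_iff_mul_comm.mpr (mul_comm _ _)
  have dd2 : derivedSeries G72 2 ≤ VK := by
    rw [derivedSeries_succ]
    refine le_trans (Subgroup.commutator_mono dd1 dd1) ?_
    rw [Subgroup.commutator_le]
    intro g hg h hh
    rw [MonoidHom.mem_ker, sgn_apply] at hg hh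
    show ⁅g,h⁆ ∈ ({x | x = 1 ∨ x = vA ∨ x = vB ∨ x = vA*vB} : Set G72)
    rw [commutatorElement_def, comm_pair g h]
    rcases fact_comm_klein g.2 h.2 hg hh with h0 | h0 | h0 | h0 <;> rw [h0] <;> decide
  have dd3 : derivedSeries G72 3 ≤ ⊥ := by
    rw [derivedSeries_succ]
    refine le_trans (Subgroup.commutator_mono dd2 dd2) ?_
    rw [Subgroup.commutator_le]
    rintro g (rfl|rfl|rfl|rfl) h (rfl|rfl|rfl|rfl) <;>
      exact Subgroup.mem_bot.mpr (by decide)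
  exact le_bot_iff.mp dd3

/-! ### The main case analysis -/

lemma no_series : ¬ HasOliverSeries G72 := by
  rintro ⟨P, H, hPH, hHn, hPn, ⟨p, a, hp, hcardP⟩, ⟨q, b, hq, hcardGH⟩, hcyc⟩
  haveI := hHn
  haveI : Finite (G72 ⧸ H) := Quotient.finite _
  have hsplit : 72 = q ^ b * Nat.card H := by
    rw [← hcardGH, ← card72]
    exact Subgroup.card_eq_card_quotient_mul_card_subgroup H
  have hdvd : q ^ b ∣ 72 := Dvd.intro _ hsplit.symm
  -- the possible prime-power values of |G/H|
  have hqb : q^b = 1 ∨ q^b = 2 ∨ q^b = 3 ∨ q^b = 4 ∨ q^b = 8 ∨ q^b = 9 := by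
    rcases Nat.eq_zero_or_pos b with hb | hb
    · subst hb; left; rfl
    · have hq72 : q ∣ 72 := dvd_trans (dvd_pow_self q hb.ne') hdvd
      have hqlt : q < 73 := lt_of_le_of_lt (Nat.le_of_dvd (by norm_num) hq72) (by norm_num)
      have h23 : q = 2 ∨ q = 3 := by
        have hall : ∀ q' < 73, Nat.Prime q' → q' ∣ 72 → q' = 2 ∨ q' = 3 := by decide
        exact hall q hqlt hq hq72
      rcases h23 with rfl | rfl
      · have hble : b ≤ 3 := by
          by_contra hb4
          have h16 : (16:ℕ) ∣ 72 := by
            calc (16:ℕ) = 2^4 := by norm_num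
              _ ∣ 2^b := pow_dvd_pow 2 (by omega)
              _ ∣ 72 := hdvd
          norm_num at h16
        interval_cases b <;> norm_num
      · have hble : b ≤ 2 := by
          by_contra hb3
          have h27 : (27:ℕ) ∣ 72 := by
            calc (27:ℕ) = 3^3 := by norm_num
              _ ∣ 3^b := pow_dvd_pow 3 (by omega)
              _ ∣ 72 := hdvd
          norm_num at h27
        interval_cases b <;> norm_num
  rcases hqb with hv | hv | hv | hv | hv | hv
  -- ================= Case |G/H| = 1, so H = G =================
  · rw [hv] at hsplit
    have hHtop : H = ⊤ := Subgroup.eq_top_of_card_eq H (by rw [card72]; omega)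
    have hmem : ∀ x : G72, x ∈ H := by rw [hHtop]; exact fun x => Subgroup.mem_top x
    have hw3 : A1*A2*A1⁻¹*A2⁻¹ ∈ P := comm_mem hPH hPn hcyc (hmem A1) (hmem A2)
    have hw2 : E1*E2*E1⁻¹*E2⁻¹ ∈ P := comm_mem hPH hPn hcyc (hmem E1) (hmem E2)
    rw [eqE1] at hw3
    exact two_three_dvd hp hcardP hw2 hw3 w2sq w2ne E1cube E1ne
  -- ================= Case |G/H| = 2, so |H| = 36 =================
  · rw [hv] at hsplit
    have hH36 : Nat.card H = 36 := by omega
    have hsq : ∀ g : G72, g*g ∈ H := by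
      intro g
      have h1 : ((g*g : G72) : G72 ⧸ H) = ((g : G72 ⧸ H))^2 := by
        rw [pow_two]; rfl
      have h2 : ((g : G72 ⧸ H))^2 = 1 := by
        have := pow_card_eq_one' (G := G72 ⧸ H) (x := (g : G72 ⧸ H))
        rwa [hcardGH, hv] at this
      exact (QuotientGroup.eq_one_iff _).mp (h1.trans h2)
    have hTH : ∀ x ∈ TF, x ∈ H := by
      intro x hx
      obtain ⟨g, _, rfl⟩ := Finset.mem_image.mp hx
      exact hsq g
    have hHT : ∀ x ∈ H, x ∈ TF :=
      mem_finset_of_mem H TF hTH (by rw [hH36, fact_TF_card])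
    -- the 3-cycles gc1 gc2 gc3 are squares, hence in H
    have hgc1 : gc1 ∈ H := hTH _ (Finset.mem_image.mpr ⟨sq1, Finset.mem_univ _, gc1sq⟩)
    have hgc2 : gc2 ∈ H := hTH _ (Finset.mem_image.mpr ⟨sq2, Finset.mem_univ _, gc2sq⟩)
    have hgc3 : gc3 ∈ H := hTH _ (Finset.mem_image.mpr ⟨sq3, Finset.mem_univ _, gc3sq⟩)
    -- the Klein four group is contained in P
    have hvA : vA ∈ P := by
      have h := comm_mem hPH hPn hcyc hgc1 hgc2
      rwa [eqvA] at h
    have hvB : vB ∈ P := by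
      have h := comm_mem hPH hPn hcyc hgc1 hgc3
      rwa [eqvB] at h
    have hvC : vA*vB ∈ P := mul_mem hvA hvB
    -- every element of H cubes into P
    have hcube : ∀ z : G72, z ∈ H → z*z*z ∈ P := by
      intro z hz
      obtain ⟨g, _, rfl⟩ := Finset.mem_image.mp (hHT z hz)
      rcases fact_cube g with h0 | h0 | h0 | h0 <;> rw [h0]
      · exact one_mem P
      · exact hvA
      · exact hvB
      · exact hvC
    -- hence the cyclic quotient H/P has exponent dividing 3
    letI := hPn
    haveI : IsCyclic (H ⧸ P.subgroupOf H) := hcyc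
    have hQ3 : ∀ y : H ⧸ P.subgroupOf H, y^3 = 1 := by
      intro y
      induction y using QuotientGroup.induction_on with
      | H z =>
        rw [← QuotientGroup.mk_pow, QuotientGroup.eq_one_iff, Subgroup.mem_subgroupOf]
        have h2 : ((z^3 : H) : G72) = (z:G72)*(z:G72)*(z:G72) := by
          push_cast
          rw [pow_succ, pow_two]
        rw [h2]
        exact hcube _ z.2
    have hexp : Nat.card (H ⧸ P.subgroupOf H) ∣ 3 := by
      rw [← IsCyclic.exponent_eq_card]
      exact Monoid.exponent_dvd_of_forall_pow_eq_one hQ3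
    have hprodH : Nat.card H =
        Nat.card (H ⧸ P.subgroupOf H) * Nat.card (P.subgroupOf H) :=
      Subgroup.card_eq_card_quotient_mul_card_subgroup _
    have hPP : Nat.card (P.subgroupOf H) = Nat.card P :=
      Nat.card_congr (Subgroup.subgroupOfEquivOfLe hPH).toEquiv
    have h13 : Nat.card (H ⧸ P.subgroupOf H) = 1 ∨ Nat.card (H ⧸ P.subgroupOf H) = 3 :=
      (Nat.Prime.eq_one_or_self_of_dvd Nat.prime_three _ hexp)
    have hP1236 : Nat.card P = 36 ∨ Nat.card P = 12 := by
      rw [hH36, hPP] at hprodH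
      rcases h13 with h | h <;> rw [h] at hprodH <;> omega
    have h2d : 2 ∣ Nat.card P := by rcases hP1236 with h | h <;> omega
    have h3d : 3 ∣ Nat.card P := by rcases hP1236 with h | h <;> omega
    exact prime_pow_not_div_6 hp hcardP h2d h3d
  -- ================= Case |G/H| = 3, so |H| = 24 =================
  · rw [hv] at hsplit
    have hH24 : Nat.card H = 24 := by omega
    haveI : Fact (Nat.Prime 3) := ⟨Nat.prime_three⟩
    have hcyc3 : IsCyclic (G72 ⧸ H) := isCyclic_of_prime_card (hcardGH.trans hv)
    have hcomm : ∀ u v : G72, u*v*u⁻¹*v⁻¹ ∈ H := comm_mem' H hcyc3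
    have hE1 : E1 ∈ H := by
      have h := hcomm A1 A2; rwa [eqE1] at h
    have hE2 : E2 ∈ H := by
      have h := hcomm A1 A3; rwa [eqE2] at h
    have hE3 : E3 ∈ H := by
      have h := hcomm A4 A5; rwa [eqE3] at h
    -- H contains an odd element
    have hodd : ∃ h ∈ H, Perm.sign h.2 = -1 := by
      by_contra hno
      push_neg at hno
      have hle : H ≤ sgn.ker := by
        intro x hx
        rw [MonoidHom.mem_ker, sgn_apply]
        rcases Int.units_eq_one_or (Perm.sign x.2) with h | h
        · exact h
        · exact absurd h (hno x hx)
      have hdvd36 : Nat.card H ∣ Nat.card sgn.ker := Subgroup.card_dvd_of_le hle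
      rw [hH24, ker36] at hdvd36
      norm_num at hdvd36
    obtain ⟨h, hhH, hhsgn⟩ := hodd
    -- an element of order 2 in P
    have hw2 : E1*E2*E1⁻¹*E2⁻¹ ∈ P := comm_mem hPH hPn hcyc hE1 hE2
    -- an element of order 3 in P
    rcases fact_odd h.2 hhsgn with ⟨h3, hne⟩ | ⟨h3, hne⟩ | ⟨h3, hne⟩
    · have hw3 : h*E1*h⁻¹*E1⁻¹ ∈ P := comm_mem hPH hPn hcyc hhH hE1
      rw [comm_pair h E1] at hw3
      exact two_three_dvd hp hcardP hw2 hw3 w2sq w2ne (pair_cube_one h3) (pair_ne_one hne)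
    · have hw3 : h*E2*h⁻¹*E2⁻¹ ∈ P := comm_mem hPH hPn hcyc hhH hE2
      rw [comm_pair h E2] at hw3
      exact two_three_dvd hp hcardP hw2 hw3 w2sq w2ne (pair_cube_one h3) (pair_ne_one hne)
    · have hw3 : h*E3*h⁻¹*E3⁻¹ ∈ P := comm_mem hPH hPn hcyc hhH hE3
      rw [comm_pair h E3] at hw3
      exact two_three_dvd hp hcardP hw2 hw3 w2sq w2ne (pair_cube_one h3) (pair_ne_one hne)
  -- ================= Case |G/H| = 4, so |H| = 18 =================
  · rw [hv] at hsplit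
    have hH18 : Nat.card H = 18 := by omega
    have hpow : ∀ g : G72, g^4 ∈ H := by
      intro g
      have h1 : ((g^4 : G72) : G72 ⧸ H) = ((g : G72 ⧸ H))^4 := by rfl
      have h2 : ((g : G72 ⧸ H))^4 = 1 := by
        have := pow_card_eq_one' (G := G72 ⧸ H) (x := (g : G72 ⧸ H))
        rwa [hcardGH, hv] at this
      exact (QuotientGroup.eq_one_iff _).mp (h1.trans h2)
    have hsub : ∀ x ∈ Finset.univ.filter (fun x : G72 => x*x*x = 1), x ∈ H := by
      intro x hx
      have hx3 : x*x*x = 1 := (Finset.mem_filter.mp hx).2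
      have hx4 : x^4 = x := by
        rw [pow_succ, pow_succ, pow_succ, pow_one, hx3, one_mul]
      exact hx4 ▸ hpow x
    have hle := card_le_of_finset H _ hsub
    rw [fact_S3_card, hH18] at hle
    omega
  -- ================= Case |G/H| = 8, so |H| = 9 =================
  · rw [hv] at hsplit
    have hH9 : Nat.card H = 9 := by omega
    have hpow : ∀ g : G72, g^8 ∈ H := by
      intro g
      have h1 : ((g^8 : G72) : G72 ⧸ H) = ((g : G72 ⧸ H))^8 := by rfl
      have h2 : ((g : G72 ⧸ H))^8 = 1 := by
        have := pow_card_eq_one' (G := G72 ⧸ H) (x := (g : G72 ⧸ H))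
        rwa [hcardGH, hv] at this
      exact (QuotientGroup.eq_one_iff _).mp (h1.trans h2)
    have hsub : ∀ x ∈ Finset.univ.filter (fun x : G72 => x*x*x = 1), x ∈ H := by
      intro x hx
      have hx3 : x^3 = 1 := by
        rw [pow_succ, pow_two]; exact (Finset.mem_filter.mp hx).2
      have hx16 : (x*x)^8 = x := by
        rw [← pow_two, ← pow_mul]
        conv_lhs => rw [show (2*8 : ℕ) = 3*5+1 by norm_num]
        rw [pow_succ, pow_mul, hx3, one_pow, one_mul]
      exact hx16 ▸ hpow (x*x)
    have hle := card_le_of_finset H _ hsub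
    rw [fact_S3_card, hH9] at hle
    omega
  -- ================= Case |G/H| = 9, so |H| = 8 =================
  · rw [hv] at hsplit
    have hH8 : Nat.card H = 8 := by omega
    have hpow : ∀ g : G72, g^9 ∈ H := by
      intro g
      have h1 : ((g^9 : G72) : G72 ⧸ H) = ((g : G72 ⧸ H))^9 := by rfl
      have h2 : ((g : G72 ⧸ H))^9 = 1 := by
        have := pow_card_eq_one' (G := G72 ⧸ H) (x := (g : G72 ⧸ H))
        rwa [hcardGH, hv] at this
      exact (QuotientGroup.eq_one_iff _).mp (h1.trans h2)
    have hsub : ∀ x ∈ Finset.univ.filter (fun x : G72 => x*x = 1), x ∈ H := by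
      intro x hx
      have hx2 : x^2 = 1 := by
        rw [pow_two]; exact (Finset.mem_filter.mp hx).2
      have hx9 : x^9 = x := by
        conv_lhs => rw [show (9 : ℕ) = 2*4+1 by norm_num]
        rw [pow_succ, pow_mul, hx2, one_pow, one_mul]
      exact hx9 ▸ hpow x
    have hle := card_le_of_finset H _ hsub
    rw [fact_S2_card, hH8] at hle
    omega

end OliverAux72

/-- The group `C₃ × S₄`, the direct product of the cyclic group of order `3` and the
symmetric group on `4` letters — a solvable group of order `72` — is an Oliver group. -/
theorem isOliverGroup_C3_prod_S4 :
    IsSolvable (Multiplicative (ZMod 3) × Equiv.Perm (Fin 4)) ∧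
    Nat.card (Multiplicative (ZMod 3) × Equiv.Perm (Fin 4)) = 72 ∧
    IsOliverGroup (Multiplicative (ZMod 3) × Equiv.Perm (Fin 4)) := by
  exact ⟨OliverAux72.solvable72, OliverAux72.card72, OliverAux72.no_series⟩
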